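/- Let G = (V,E) be a finite simple graph and s : V → Bool. If β(s) = {u | s(u) = ⊤ and all neighbours of u have s-value ⊥} is a maximal independent set of G, then no vertex satisfies the Candidacy guard (s(u) = ⊥ and all neighbours ⊥) and no vertex satisfies the Withdrawal guard (s(u) = ⊤ and some neighbour ⊤). -/
import Mathlib


def beta {V : Type*} (G : SimpleGraph V) (s : V → Bool) : Set V :=
  {u | s u = true ∧ ∀ v, G.Adj u v → s v = false}

theorem stmt_7 {V : Type*} [Fintype V] (G : SimpleGraph V) (s : V → Bool)
    (hind : ∀ u ∈ beta G s, ∀ v ∈ beta G s, ¬ G.Adj u v)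
    (hmax : ∀ w : V, w ∉ beta G s → ∃ v ∈ beta G s, G.Adj w v) :
    ∀ u : V,
      ¬ (s u = false ∧ ∀ v, G.Adj u v → s v = false) ∧
      ¬ (s u = true ∧ ∃ v, G.Adj u v ∧ s v = true) := by
  intro u
  constructor
  · rintro ⟨hu, hnb⟩
    have hnot : u ∉ beta G s := fun h => by have := h.1; rw [hu] at this; exact absurd this (by simp)
    obtain ⟨v, hv, hadj⟩ := hmax u hnot
    exact absurd hv.1 (by simp [hnb v hadj])
  · rintro ⟨hu, v, hadj, hv⟩
    have hnot : u ∉ beta G s := fun h => by simp [h.2 v hadj] at hv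
    obtain ⟨w, hw, hadj'⟩ := hmax u hnot
    have := hw.2 u hadj'.symm
    simp [this] at hu
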